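/- Define G_2(θ) = θ·(2−2x_1)/(2−7x_1/3), where x_1 = x_1(θ) ∈ (0, 6/7) is the unique solution of (6−7x_1)^{7/3}/(x_1^{1/3}(1−x_1)^2) = 36θ^2/5^{2/3}. Then G_2(θ) ≤ 2 if and only if θ ≤ 128/89. -/

import Mathlib

open Real Set

set_option maxHeartbeats 1000000 in
lemma H_anti : StrictAntiOn (fun x : ℝ => (6 - 7*x)^7 / (x * (1-x)^6)) (Set.Ioo 0 (6/7 : ℝ)) := by
  apply strictAntiOn_of_deriv_neg (convex_Ioo _ _)
  · apply ContinuousOn.div (by fun_prop) (by fun_prop)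
    rintro x ⟨hx0, hx1⟩
    have h1 : (0:ℝ) < 1 - x := by linarith
    positivity
  · intro x hx
    rw [interior_Ioo] at hx
    obtain ⟨hx0, hx67⟩ := hx
    have h1 : (0:ℝ) < 1 - x := by linarith
    have h67 : (0:ℝ) < 6 - 7*x := by linarith
    have hq : x * (1-x)^6 ≠ 0 := by positivity
    have hp : HasDerivAt (fun x : ℝ => (6 - 7*x)^7) (7 * (6-7*x)^(7-1) * (-7)) x := by
      have h₁ : HasDerivAt (fun x : ℝ => 6 - 7*x) (-7) x := by
        simpa using ((hasDerivAt_id x).const_mul (7:ℝ)).const_sub 6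
      exact h₁.pow 7
    have hq' : HasDerivAt (fun x : ℝ => x * (1-x)^6) (1 * (1-x)^6 + x * (6 * (1-x)^(6-1) * (-1))) x := by
      have h₂ : HasDerivAt (fun x : ℝ => 1 - x) (-1) x := by
        simpa using (hasDerivAt_id x).const_sub 1
      exact (hasDerivAt_id x).mul (h₂.pow 6)
    have hd := hp.div hq' hq
    rw [show (fun x : ℝ => (6 - 7*x)^7 / (x * (1-x)^6)) = ((fun x : ℝ => (6 - 7*x)^7) / fun x => x * (1-x)^6) from rfl, hd.deriv]
    apply div_neg_of_neg_of_pos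
    · have hnum : (7 * (6-7*x)^(7-1) * (-7)) * (x * (1-x)^6) - (6-7*x)^7 * (1 * (1-x)^6 + x * (6 * (1-x)^(6-1) * (-1)))
          = -6 * ((6-7*x)^6 * (1-x)^5) := by ring
      rw [hnum]
      have hpos : (0:ℝ) < (6-7*x)^6 * (1-x)^5 := by positivity
      linarith
    · have hx6 : (0:ℝ) < x * (1-x)^6 := by positivity
      positivity

set_option maxHeartbeats 1000000 in
/-- For `G₂(θ) = θ(2-2x₁)/(2-7x₁/3)` with `x₁ ∈ (0,6/7)` the unique solution of
`(6-7x₁)^{7/3}/(x₁^{1/3}(1-x₁)²) = 36θ²/5^{2/3}`, one has `G₂(θ) ≤ 2 ↔ θ ≤ 128/89`. -/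
theorem stmt11 (θ : ℝ) (hθ : 0 < θ) (x₁ : ℝ) (hx₁ : x₁ ∈ Set.Ioo (0 : ℝ) (6 / 7))
    (heq : (6 - 7 * x₁) ^ ((7 : ℝ) / 3) / (x₁ ^ ((1 : ℝ) / 3) * (1 - x₁) ^ 2)
      = 36 * θ ^ 2 / (5 : ℝ) ^ ((2 : ℝ) / 3)) :
    θ * (2 - 2 * x₁) / (2 - 7 * x₁ / 3) ≤ 2 ↔ θ ≤ 128 / 89 := by
  obtain ⟨hx0, hx67⟩ := hx₁
  have h1x : (0:ℝ) < 1 - x₁ := by linarith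
  have h67 : (0:ℝ) < 6 - 7 * x₁ := by linarith
  set a := x₁ ^ ((1:ℝ)/3) with ha_def
  set b := (6 - 7 * x₁) ^ ((1:ℝ)/3) with hb_def
  set f := (5:ℝ) ^ ((1:ℝ)/3) with hf_def
  have ha0 : 0 < a := Real.rpow_pos_of_pos hx0 _
  have hb0 : 0 < b := Real.rpow_pos_of_pos h67 _
  have hf0 : 0 < f := Real.rpow_pos_of_pos (by norm_num) _
  have ha3 : a ^ 3 = x₁ := by
    rw [ha_def, ← Real.rpow_natCast (x₁ ^ ((1:ℝ)/3)) 3, ← Real.rpow_mul hx0.le]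
    norm_num
  have hb3 : b ^ 3 = 6 - 7 * x₁ := by
    rw [hb_def, ← Real.rpow_natCast ((6 - 7*x₁) ^ ((1:ℝ)/3)) 3, ← Real.rpow_mul h67.le]
    norm_num
  have hf3 : f ^ 3 = 5 := by
    rw [hf_def, ← Real.rpow_natCast ((5:ℝ) ^ ((1:ℝ)/3)) 3, ← Real.rpow_mul (by norm_num : (0:ℝ) ≤ 5)]
    norm_num
  have hb7 : (6 - 7 * x₁) ^ ((7:ℝ)/3) = b ^ 7 := by
    rw [hb_def, ← Real.rpow_natCast ((6 - 7*x₁) ^ ((1:ℝ)/3)) 7, ← Real.rpow_mul h67.le]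
    norm_num
  have hf2 : (5:ℝ) ^ ((2:ℝ)/3) = f ^ 2 := by
    rw [hf_def, ← Real.rpow_natCast ((5:ℝ) ^ ((1:ℝ)/3)) 2, ← Real.rpow_mul (by norm_num : (0:ℝ) ≤ 5)]
    norm_num
  rw [hb7, hf2] at heq
  have hkey : b ^ 7 * f ^ 2 = 36 * θ ^ 2 * (a * (1 - x₁) ^ 2) := by
    field_simp at heq
    linarith [heq]
  -- LHS equivalence chain
  have step1 : θ * (2 - 2 * x₁) / (2 - 7 * x₁ / 3) ≤ 2 ↔ 3 * θ * (1 - x₁) ≤ 6 - 7 * x₁ := by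
    rw [div_le_iff₀ (by linarith : (0:ℝ) < 2 - 7 * x₁ / 3)]
    constructor <;> intro h <;> linarith
  have step2 : 3 * θ * (1 - x₁) ≤ 6 - 7 * x₁ ↔ (3 * θ * (1 - x₁)) ^ 2 ≤ (6 - 7 * x₁) ^ 2 := by
    constructor
    · intro h; exact pow_le_pow_left₀ (by positivity) h 2
    · intro h
      nlinarith [mul_pos (mul_pos (by norm_num : (0:ℝ) < 3) hθ) h1x]
  have step3 : (3 * θ * (1 - x₁)) ^ 2 ≤ (6 - 7 * x₁) ^ 2 ↔ f ^ 2 * b ≤ 4 * a := by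
    rw [← hb3]
    constructor
    · intro h
      have h2 : (f ^ 2 * b) * b ^ 6 ≤ (4 * a) * b ^ 6 := by
        nlinarith [mul_le_mul_of_nonneg_left h (by positivity : (0:ℝ) ≤ 4 * a)]
      exact le_of_mul_le_mul_right h2 (by positivity)
    · intro h
      have h2 := mul_le_mul_of_nonneg_right h (by positivity : (0:ℝ) ≤ b ^ 6)
      nlinarith [h2]
  have step4 : f ^ 2 * b ≤ 4 * a ↔ 150 / 239 ≤ x₁ := by
    rw [show (f ^ 2 * b ≤ 4 * a) ↔ ((f ^ 2 * b) ^ 3 ≤ (4 * a) ^ 3) from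
      ⟨fun h => pow_le_pow_left₀ (by positivity) h 3,
       fun h => le_of_pow_le_pow_left₀ (by norm_num) (by positivity) h⟩]
    have e : (f ^ 2 * b) ^ 3 = 25 * (6 - 7 * x₁) := by
      have h' : (f ^ 2 * b) ^ 3 = (f ^ 3) ^ 2 * b ^ 3 := by ring
      rw [h', hf3, hb3]; norm_num
    have e2 : (4 * a) ^ 3 = 64 * x₁ := by
      have h' : (4 * a) ^ 3 = 64 * a ^ 3 := by ring
      rw [h', ha3]
    rw [e, e2]
    constructor <;> intro h <;> linarith
  -- RHS equivalence chain
  have rstep1 : θ ≤ 128 / 89 ↔ θ ^ 2 ≤ (128 / 89 : ℝ) ^ 2 := by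
    constructor
    · intro h; exact pow_le_pow_left₀ hθ.le h 2
    · intro h; nlinarith
  have rstep2 : θ ^ 2 ≤ (128 / 89 : ℝ) ^ 2 ↔ b ^ 7 * f ^ 2 ≤ 36 * (128/89:ℝ)^2 * (a * (1 - x₁) ^ 2) := by
    constructor
    · intro h
      rw [hkey]
      have h2 := mul_le_mul_of_nonneg_right h (by positivity : (0:ℝ) ≤ 36 * (a * (1 - x₁) ^ 2))
      nlinarith [h2]
    · intro h
      rw [hkey] at h
      have h2 : θ ^ 2 * (36 * (a * (1 - x₁) ^ 2)) ≤ (128/89:ℝ)^2 * (36 * (a * (1 - x₁) ^ 2)) := by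
        nlinarith [h]
      exact le_of_mul_le_mul_right h2 (by positivity)
  have rstep3 : b ^ 7 * f ^ 2 ≤ 36 * (128/89:ℝ)^2 * (a * (1 - x₁) ^ 2) ↔
      25 * (6 - 7*x₁) ^ 7 ≤ 46656 * (128/89:ℝ)^6 * (x₁ * (1 - x₁) ^ 6) := by
    rw [show (b ^ 7 * f ^ 2 ≤ 36 * (128/89:ℝ)^2 * (a * (1 - x₁) ^ 2)) ↔
        ((b ^ 7 * f ^ 2) ^ 3 ≤ (36 * (128/89:ℝ)^2 * (a * (1 - x₁) ^ 2)) ^ 3) from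
      ⟨fun h => pow_le_pow_left₀ (by positivity) h 3,
       fun h => le_of_pow_le_pow_left₀ (by norm_num) (by positivity) h⟩]
    have e : (b ^ 7 * f ^ 2) ^ 3 = 25 * (6 - 7*x₁) ^ 7 := by
      have h' : (b ^ 7 * f ^ 2) ^ 3 = (b ^ 3) ^ 7 * ((f ^ 3) ^ 2) := by ring
      rw [h', hb3, hf3]; ring
    have e2 : (36 * (128/89:ℝ)^2 * (a * (1 - x₁) ^ 2)) ^ 3
        = 46656 * (128/89:ℝ)^6 * (x₁ * (1 - x₁) ^ 6) := by
      have h' : (36 * (128/89:ℝ)^2 * (a * (1 - x₁) ^ 2)) ^ 3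
          = 46656 * (128/89:ℝ)^6 * (a ^ 3 * (1 - x₁) ^ 6) := by ring
      rw [h', ha3]
    rw [e, e2]
  have rstep4 : 25 * (6 - 7*x₁) ^ 7 ≤ 46656 * (128/89:ℝ)^6 * (x₁ * (1 - x₁) ^ 6) ↔
      150 / 239 ≤ x₁ := by
    have hmem : x₁ ∈ Set.Ioo (0:ℝ) (6/7) := ⟨hx0, hx67⟩
    have hcmem : (150/239 : ℝ) ∈ Set.Ioo (0:ℝ) (6/7) := by constructor <;> norm_num
    have hiff := H_anti.le_iff_ge hmem hcmem
    rw [← hiff]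
    have hq1 : (0:ℝ) < x₁ * (1 - x₁) ^ 6 := by positivity
    have hc1 : (0:ℝ) < (150/239 : ℝ) * (1 - 150/239) ^ 6 := by norm_num
    rw [div_le_div_iff₀ hq1 hc1]
    constructor <;> intro h <;> nlinarith [h]
  rw [step1, step2, step3, step4, rstep1, rstep2, rstep3, rstep4]
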